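/- For every β > 0, the function 𝔰^β is continuous on (0,∞), and for every t with 0 < t < 1/2 there exist constants 0 < c ≤ C < ∞ (with c depending only on β and C depending only on β and t) such that c·(τ (log τ)²)^{−1} ≤ 𝔰^β(τ) ≤ C·(τ (log τ)²)^{−1} for all 0 < τ ≤ t. -/

import Mathlib

open MeasureTheory Set

/-- `𝔰^β(τ) = 4π ∫₀^∞ β^u τ^{u-1} / Γ(u) du`. -/
noncomputable def sBeta (β τ : ℝ) : ℝ :=
  4 * Real.pi * ∫ u in Set.Ioi (0 : ℝ), β ^ u * τ ^ (u - 1) / Real.Gamma u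

/-- Lower bound for Gamma: for `x ≥ 1`, `M ≥ 1`, `exp (-(M+1)) * M^(x-1) ≤ Γ x`. -/
lemma gamma_lb {x M : ℝ} (hx : 1 ≤ x) (hM : 1 ≤ M) :
    Real.exp (-(M + 1)) * M ^ (x - 1) ≤ Real.Gamma x := by
  have hx0 : (0:ℝ) < x := by linarith
  rw [Real.Gamma_eq_integral hx0]
  have hsub : Ioc M (M + 1) ⊆ Ioi (0:ℝ) := fun y hy => lt_of_lt_of_le (by linarith) hy.1.le
  have hint : IntegrableOn (fun t : ℝ => Real.exp (-t) * t ^ (x - 1)) (Ioi 0) :=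
    Real.GammaIntegral_convergent hx0
  have h1 : Real.exp (-(M + 1)) * M ^ (x - 1) ≤
      ∫ t in Ioc M (M + 1), Real.exp (-t) * t ^ (x - 1) := by
    have := setIntegral_ge_of_const_le (c := Real.exp (-(M + 1)) * M ^ (x - 1))
      (measurableSet_Ioc) (by simp [Real.volume_Ioc])
      (fun t ht => by
        have h1 : Real.exp (-(M+1)) ≤ Real.exp (-t) := Real.exp_le_exp.2 (by linarith [ht.2])
        have h2 : M ^ (x-1) ≤ t ^ (x-1) :=
          Real.rpow_le_rpow (by linarith) ht.1.le (by linarith)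
        exact mul_le_mul h1 h2 (Real.rpow_nonneg (by linarith) _) (Real.exp_pos _).le)
      (hint.mono_set hsub)
    calc Real.exp (-(M + 1)) * M ^ (x - 1)
        = Real.exp (-(M + 1)) * M ^ (x - 1) * (volume (Ioc M (M+1))).toReal := by
          simp [Real.volume_Ioc]
      _ ≤ _ := by rw [smul_eq_mul, mul_comm] at this; exact this
  refine h1.trans (setIntegral_mono_set hint ?_ (HasSubset.Subset.eventuallyLE hsub))
  filter_upwards [self_mem_ae_restrict measurableSet_Ioi] with t ht
  exact mul_nonneg (Real.exp_pos _).le (Real.rpow_nonneg (le_of_lt ht) _)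

/-- `(Γ u)⁻¹ ≤ e² u` for `u > 0`. -/
lemma recGamma_le {u : ℝ} (hu : 0 < u) : (Real.Gamma u)⁻¹ ≤ Real.exp 2 * u := by
  have h1 : Real.exp (-2) ≤ u * Real.Gamma u := by
    have := gamma_lb (x := u + 1) (M := 1) (by linarith) le_rfl
    rw [Real.Gamma_add_one hu.ne'] at this
    simpa [show -(1+1:ℝ) = -2 by norm_num] using this
  have hΓ : 0 < Real.Gamma u := Real.Gamma_pos_of_pos hu
  rw [inv_le_iff_one_le_mul₀ hΓ]
  have h2 : Real.exp (-2) * Real.exp 2 = 1 := by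
    rw [← Real.exp_add]; norm_num
  nlinarith [Real.exp_pos (2:ℝ)]

/-- `u ≤ (Γ u)⁻¹` for `0 < u ≤ 1`. -/
lemma recGamma_ge {u : ℝ} (hu : 0 < u) (hu1 : u ≤ 1) : u ≤ (Real.Gamma u)⁻¹ := by
  have hΓ : 0 < Real.Gamma u := Real.Gamma_pos_of_pos hu
  have h1 : Real.Gamma (u + 1) ≤ 1 := by
    have hc := Real.convexOn_Gamma.2 (mem_Ioi.2 one_pos) (mem_Ioi.2 (two_pos (α := ℝ)))
      (show (0:ℝ) ≤ 1 - u by linarith) hu.le (show (1 - u) + u = 1 by ring)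
    have he : (1 - u) • (1:ℝ) + u • (2:ℝ) = u + 1 := by simp only [smul_eq_mul]; ring
    rw [he] at hc
    simpa [Real.Gamma_one, Real.Gamma_two, smul_eq_mul] using hc
  rw [Real.Gamma_add_one hu.ne'] at h1
  have h2 : Real.Gamma u * (Real.Gamma u)⁻¹ = 1 := mul_inv_cancel₀ hΓ.ne'
  nlinarith [inv_pos.2 hΓ]

/-- continuity of `γ^u / Γ u` on `(0,∞)` -/
lemma contOn_aux {γ : ℝ} (hγ0 : γ ≠ 0) : ContinuousOn (fun u : ℝ => γ ^ u / Real.Gamma u) (Ioi 0) := by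
  apply ContinuousOn.div
  · exact fun u hu => (Real.continuousAt_const_rpow hγ0).continuousWithinAt
  · intro u hu
    exact (Real.differentiableAt_Gamma (fun m => by
      have : (0:ℝ) < u := hu
      intro h; rw [h] at this; simp at this; linarith [Nat.cast_nonneg (α := ℝ) m])).continuousAt.continuousWithinAt
  · exact fun u hu => (Real.Gamma_pos_of_pos hu).ne'

/-- `γ^u / Γ u` is integrable on `(0,∞)` for `γ > 0`. -/
lemma key_int {γ : ℝ} (hγ : 0 < γ) :
    IntegrableOn (fun u : ℝ => γ ^ u / Real.Gamma u) (Ioi 0) := by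
  set M : ℝ := max 1 (2 * γ) with hMdef
  have hM1 : (1:ℝ) ≤ M := le_max_left _ _
  have hM2 : 2 * γ ≤ M := le_max_right _ _
  have hM0 : (0:ℝ) < M := lt_of_lt_of_le one_pos hM1
  set K : ℝ := max (2 * Real.exp 2 * max 1 γ) (Real.exp (M + 1) * M) with hKdef
  have hlog2 : (0:ℝ) < Real.log 2 := Real.log_pos one_lt_two
  have hint : Integrable (fun u : ℝ => K * Real.exp (-Real.log 2 * u))
      (volume.restrict (Ioi 0)) :=
    (exp_neg_integrableOn_Ioi 0 hlog2).const_mul K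
  refine hint.mono' ((contOn_aux hγ.ne').aestronglyMeasurable measurableSet_Ioi) ?_
  filter_upwards [self_mem_ae_restrict measurableSet_Ioi] with u hu
  have hu0 : (0:ℝ) < u := hu
  have hΓ : 0 < Real.Gamma u := Real.Gamma_pos_of_pos hu0
  have hnn : 0 ≤ γ ^ u / Real.Gamma u := div_nonneg (Real.rpow_nonneg hγ.le u) hΓ.le
  rw [Real.norm_of_nonneg hnn]
  have hhalf : Real.exp (-Real.log 2 * u) = (1/2 : ℝ) ^ u := by
    rw [Real.rpow_def_of_pos (by norm_num : (0:ℝ) < 1/2)]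
    congr 1
    rw [Real.log_div one_ne_zero two_ne_zero, Real.log_one]
    ring
  rcases le_total u 1 with hu1 | hu1
  · -- small u
    have h1 : γ ^ u ≤ max 1 γ := by
      rcases le_total γ 1 with hγ1 | hγ1
      · exact le_trans (Real.rpow_le_one hγ.le hγ1 hu0.le) (le_max_left _ _)
      · exact le_trans (by
          calc γ ^ u ≤ γ ^ (1:ℝ) := Real.rpow_le_rpow_of_exponent_le hγ1 hu1
          _ = γ := Real.rpow_one γ) (le_max_right _ _)
    have h2 : (Real.Gamma u)⁻¹ ≤ Real.exp 2 := by
      calc (Real.Gamma u)⁻¹ ≤ Real.exp 2 * u := recGamma_le hu0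
      _ ≤ Real.exp 2 * 1 := by nlinarith [Real.exp_pos (2:ℝ)]
      _ = Real.exp 2 := mul_one _
    have h3 : (1/2 : ℝ) ≤ (1/2 : ℝ) ^ u := by
      calc (1/2 : ℝ) = (1/2 : ℝ) ^ (1:ℝ) := (Real.rpow_one _).symm
      _ ≤ (1/2 : ℝ) ^ u := Real.rpow_le_rpow_of_exponent_ge (by norm_num) (by norm_num) hu1
    rw [div_eq_mul_inv, hhalf]
    calc γ ^ u * (Real.Gamma u)⁻¹ ≤ max 1 γ * Real.exp 2 :=
          mul_le_mul h1 h2 (inv_pos.2 hΓ).le (le_trans zero_le_one (le_max_left _ _))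
    _ = (2 * Real.exp 2 * max 1 γ) * (1/2 : ℝ) := by ring
    _ ≤ K * (1/2 : ℝ) ^ u := by
        apply mul_le_mul (le_max_left _ _) h3 (by norm_num)
        positivity
  · -- large u
    have hg : Real.exp (-(M + 1)) * M ^ (u - 1) ≤ Real.Gamma u := gamma_lb hu1 hM1
    have hML : 0 < Real.exp (-(M + 1)) * M ^ (u - 1) :=
      mul_pos (Real.exp_pos _) (Real.rpow_pos_of_pos hM0 _)
    have h4 : γ ^ u / Real.Gamma u ≤ γ ^ u / (Real.exp (-(M + 1)) * M ^ (u - 1)) :=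
      div_le_div_of_nonneg_left (Real.rpow_nonneg hγ.le u) hML hg
    have h5 : γ ^ u / (Real.exp (-(M + 1)) * M ^ (u - 1)) =
        Real.exp (M + 1) * M * (γ / M) ^ u := by
      rw [Real.div_rpow hγ.le hM0.le, Real.rpow_sub hM0, Real.rpow_one, Real.exp_neg]
      field_simp
    have h6 : (γ / M) ^ u ≤ (1/2 : ℝ) ^ u :=
      Real.rpow_le_rpow (div_nonneg hγ.le hM0.le)
        (by rw [div_le_div_iff₀ hM0 two_pos]; linarith) hu0.le
    rw [hhalf]
    calc γ ^ u / Real.Gamma u ≤ Real.exp (M + 1) * M * (γ / M) ^ u := h4.trans_eq h5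
    _ ≤ Real.exp (M + 1) * M * (1/2 : ℝ) ^ u := by
        apply mul_le_mul_of_nonneg_left h6 (by positivity)
    _ ≤ K * (1/2 : ℝ) ^ u := by
        apply mul_le_mul_of_nonneg_right (le_max_right _ _) (by positivity)

lemma integrand_eq {β τ : ℝ} (hβ : 0 < β) (hτ : 0 < τ) :
    (fun u : ℝ => β ^ u * τ ^ (u - 1) / Real.Gamma u) =
      fun u : ℝ => τ⁻¹ * ((β * τ) ^ u / Real.Gamma u) := by
  funext u
  rw [Real.mul_rpow hβ.le hτ.le, Real.rpow_sub hτ, Real.rpow_one]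
  ring

lemma int_on {β τ : ℝ} (hβ : 0 < β) (hτ : 0 < τ) :
    IntegrableOn (fun u : ℝ => β ^ u * τ ^ (u - 1) / Real.Gamma u) (Ioi 0) := by
  rw [integrand_eq hβ hτ]
  exact (key_int (mul_pos hβ hτ)).const_mul _

lemma cont_part {β : ℝ} (hβ : 0 < β) : ContinuousOn (sBeta β) (Set.Ioi 0) := by
  intro τ₀ hτ₀
  have hτ0 : (0:ℝ) < τ₀ := hτ₀
  apply ContinuousAt.continuousWithinAt
  unfold sBeta
  apply ContinuousAt.mul continuousAt_const
  have hmem : Ioo (τ₀/2) (2*τ₀) ∈ nhds τ₀ := Ioo_mem_nhds (by linarith) (by linarith)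
  apply continuousAt_of_dominated (bound := fun u =>
      β ^ u * (τ₀/2) ^ (u-1) / Real.Gamma u + β ^ u * (2*τ₀) ^ (u-1) / Real.Gamma u)
  · filter_upwards [hmem] with τ hτ
    exact (int_on hβ (lt_trans (by linarith) hτ.1)).aestronglyMeasurable
  · filter_upwards [hmem] with τ hτ
    filter_upwards [self_mem_ae_restrict measurableSet_Ioi] with u hu
    have hu0 : (0:ℝ) < u := hu
    have hτp : (0:ℝ) < τ := lt_trans (by linarith) hτ.1
    have hΓ : 0 < Real.Gamma u := Real.Gamma_pos_of_pos hu0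
    have hval : 0 ≤ β ^ u * τ ^ (u-1) / Real.Gamma u := by positivity
    rw [Real.norm_of_nonneg hval]
    have hbnd : τ ^ (u-1) ≤ (τ₀/2) ^ (u-1) + (2*τ₀) ^ (u-1) := by
      rcases le_total u 1 with h1 | h1
      · have : τ ^ (u-1) ≤ (τ₀/2) ^ (u-1) :=
          Real.rpow_le_rpow_of_nonpos (by linarith) hτ.1.le (by linarith)
        calc τ ^ (u-1) ≤ (τ₀/2) ^ (u-1) := this
        _ ≤ _ := le_add_of_nonneg_right (Real.rpow_nonneg (by linarith) _)
      · have : τ ^ (u-1) ≤ (2*τ₀) ^ (u-1) :=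
          Real.rpow_le_rpow hτp.le hτ.2.le (by linarith)
        calc τ ^ (u-1) ≤ (2*τ₀) ^ (u-1) := this
        _ ≤ _ := le_add_of_nonneg_left (Real.rpow_nonneg (by positivity) _)
    calc β ^ u * τ ^ (u-1) / Real.Gamma u
        ≤ β ^ u * ((τ₀/2) ^ (u-1) + (2*τ₀) ^ (u-1)) / Real.Gamma u := by gcongr
    _ = _ := by ring
  · have h1 := int_on hβ (show (0:ℝ) < τ₀/2 by linarith)
    have h2 := int_on hβ (show (0:ℝ) < 2*τ₀ by linarith)
    exact h1.add h2
  · filter_upwards [self_mem_ae_restrict measurableSet_Ioi] with u hu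
    have hu0 : (0:ℝ) < u := hu
    apply ContinuousAt.div_const
    apply ContinuousAt.mul continuousAt_const
    exact Real.continuousAt_rpow_const τ₀ (u-1) (Or.inl hτ0.ne')

lemma lower_bd {β τ : ℝ} (hβ : 0 < β) (hτ : 0 < τ) (hsl : Real.log 2 < -Real.log τ) :
    Real.pi/4 * (min 1 β * Real.exp (-(2:ℝ)⁻¹)) * (τ * (Real.log τ)^2)⁻¹ ≤ sBeta β τ := by
  set s : ℝ := -Real.log τ with hsdef
  have hlog2 : (1:ℝ)/2 < Real.log 2 := by
    have := Real.log_two_gt_d9; linarith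
  have hs0 : (0:ℝ) < s := lt_trans (by linarith) hsl
  have hs1 : (1:ℝ) < 2 * s := by linarith
  set lo : ℝ := (4*s)⁻¹ with hlodef
  set hi : ℝ := (2*s)⁻¹ with hhidef
  have hlo0 : 0 < lo := by positivity
  have hlohi : lo < hi := by
    rw [hlodef, hhidef, inv_lt_inv₀ (by positivity) (by positivity)]
    linarith
  have hhi1 : hi ≤ 1 := by
    rw [hhidef, inv_le_one_iff₀]; right; linarith
  set m : ℝ := min 1 β * (Real.exp (-(2:ℝ)⁻¹) * τ⁻¹) * (4*s)⁻¹ with hmdef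
  have hsub : Icc lo hi ⊆ Ioi (0:ℝ) := fun u hu => lt_of_lt_of_le hlo0 hu.1
  set f : ℝ → ℝ := fun u => β ^ u * τ ^ (u - 1) / Real.Gamma u with hfdef
  have hpt : ∀ u ∈ Icc lo hi, m ≤ f u := by
    intro u hu
    have hu0 : 0 < u := lt_of_lt_of_le hlo0 hu.1
    have hu1 : u ≤ 1 := hu.2.trans hhi1
    have hΓ : 0 < Real.Gamma u := Real.Gamma_pos_of_pos hu0
    have hfu : f u = β ^ u * (Real.exp (-(s*u)) * τ⁻¹) * (Real.Gamma u)⁻¹ := by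
      rw [hfdef]
      simp only
      rw [Real.rpow_sub hτ, Real.rpow_one, Real.rpow_def_of_pos hτ,
        show Real.log τ * u = -(s*u) by rw [hsdef]; ring]
      ring
    rw [hfu, hmdef]
    have hA : min 1 β ≤ β ^ u := by
      rcases le_total 1 β with h | h
      · exact le_trans (min_le_left _ _) (Real.one_le_rpow h hu0.le)
      · refine le_trans (min_le_right _ _) ?_
        calc β = β ^ (1:ℝ) := (Real.rpow_one β).symm
        _ ≤ β ^ u := Real.rpow_le_rpow_of_exponent_ge hβ h hu1
    have hB : Real.exp (-(2:ℝ)⁻¹) * τ⁻¹ ≤ Real.exp (-(s*u)) * τ⁻¹ := by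
      apply mul_le_mul_of_nonneg_right _ (by positivity)
      apply Real.exp_le_exp.2
      have : s * u ≤ 2⁻¹ := by
        calc s * u ≤ s * hi := by
              apply mul_le_mul_of_nonneg_left hu.2 hs0.le
        _ = 2⁻¹ := by rw [hhidef]; field_simp
      linarith
    have hC : (4*s)⁻¹ ≤ (Real.Gamma u)⁻¹ :=
      le_trans hu.1 (recGamma_ge hu0 hu1)
    have hmin : (0:ℝ) ≤ min 1 β := le_min zero_le_one hβ.le
    apply mul_le_mul (mul_le_mul hA hB (by positivity) (Real.rpow_nonneg hβ.le u)) hC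
      (by positivity)
    positivity
  have hIcc_int : IntegrableOn f (Icc lo hi) := (int_on hβ hτ).mono_set hsub
  have h2 : m * (hi - lo) ≤ ∫ u in Icc lo hi, f u := by
    have := setIntegral_ge_of_const_le (c := m) measurableSet_Icc
      (by rw [Real.volume_Icc]; exact ENNReal.ofReal_ne_top) hpt hIcc_int
    rwa [measureReal_def, Real.volume_Icc, ENNReal.toReal_ofReal (by linarith), smul_eq_mul, mul_comm] at this
  have h3 : ∫ u in Icc lo hi, f u ≤ ∫ u in Ioi 0, f u := by
    apply setIntegral_mono_set (int_on hβ hτ) _ (HasSubset.Subset.eventuallyLE hsub)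
    filter_upwards [self_mem_ae_restrict measurableSet_Ioi] with u hu
    have hu0 : (0:ℝ) < u := hu
    have hΓ : 0 < Real.Gamma u := Real.Gamma_pos_of_pos hu0
    show 0 ≤ β ^ u * τ ^ (u - 1) / Real.Gamma u
    positivity
  have hdiff : hi - lo = (4*s)⁻¹ := by
    rw [hhidef, hlodef]
    field_simp
    ring
  have hfin : m * (hi - lo) ≤ ∫ u in Ioi 0, f u := le_trans h2 h3
  unfold sBeta
  rw [← hfdef]
  have hπ : (0:ℝ) < Real.pi := Real.pi_pos
  calc Real.pi/4 * (min 1 β * Real.exp (-(2:ℝ)⁻¹)) * (τ * (Real.log τ)^2)⁻¹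
      = 4 * Real.pi * (m * (hi - lo)) := by
        rw [hmdef, hdiff, hsdef]
        rw [show Real.log τ = -s by rw [hsdef]; ring]
        field_simp
    _ ≤ 4 * Real.pi * ∫ u in Ioi 0, f u := by
        apply mul_le_mul_of_nonneg_left hfin (by positivity)

lemma upper_bd {β τ : ℝ} (hβ : 0 < β) (hτ : 0 < τ) (hsl : Real.log 2 < -Real.log τ) :
    sBeta β τ ≤ (4*Real.pi*(max 1 β * Real.exp 2)
        + 16*Real.pi*(∫ u in Ioi 1, β ^ u / Real.Gamma u)) * (τ * (Real.log τ)^2)⁻¹ := by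
  set s : ℝ := -Real.log τ with hsdef
  have hlog2 : (1:ℝ)/2 < Real.log 2 := by have := Real.log_two_gt_d9; linarith
  have hs0 : (0:ℝ) < s := lt_trans (by linarith) hsl
  have hτs : τ = Real.exp (-s) := by rw [hsdef, neg_neg, Real.exp_log hτ]
  set f : ℝ → ℝ := fun u => β ^ u * τ ^ (u - 1) / Real.Gamma u with hfdef
  set K : ℝ := ∫ u in Ioi 1, β ^ u / Real.Gamma u with hKdef
  have hKint : IntegrableOn (fun u : ℝ => β ^ u / Real.Gamma u) (Ioi 1) :=
    (key_int hβ).mono_set (fun x hx => show (0:ℝ) < x from lt_trans one_pos hx)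
  have hK0 : 0 ≤ K := by
    apply setIntegral_nonneg measurableSet_Ioi
    intro u hu
    have : (0:ℝ) < u := lt_trans one_pos hu
    positivity
  set P : ℝ := max 1 β * Real.exp 2 * τ⁻¹ with hPdef
  have hP0 : 0 ≤ P := by positivity
  have hfu : ∀ u : ℝ, f u = β ^ u * (Real.exp (-(s*u)) * τ⁻¹) * (Real.Gamma u)⁻¹ := by
    intro u
    show β ^ u * τ ^ (u - 1) / Real.Gamma u = _
    rw [Real.rpow_sub hτ, Real.rpow_one, Real.rpow_def_of_pos hτ,
      show Real.log τ * u = -(s*u) by rw [hsdef]; ring]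
    ring
  -- integrability of u * exp(-(s*u))
  have hue_int : IntegrableOn (fun u : ℝ => u * Real.exp (-(s*u))) (Ioi 0) := by
    have hexp : Integrable (fun u : ℝ => 4 * Real.exp (-(s - 4⁻¹) * u))
        (volume.restrict (Ioi 0)) :=
      (exp_neg_integrableOn_Ioi 0 (by linarith : (0:ℝ) < s - 4⁻¹)).const_mul 4
    have hcont : Continuous (fun u : ℝ => u * Real.exp (-(s*u))) := by fun_prop
    refine hexp.mono' hcont.aestronglyMeasurable ?_
    filter_upwards [self_mem_ae_restrict measurableSet_Ioi] with u hu
    have hu0 : (0:ℝ) < u := hu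
    rw [Real.norm_of_nonneg (by positivity)]
    have h1 : u ≤ 4 * Real.exp (4⁻¹ * u) := by
      nlinarith [Real.add_one_le_exp (4⁻¹ * u)]
    calc u * Real.exp (-(s*u)) ≤ 4 * Real.exp (4⁻¹*u) * Real.exp (-(s*u)) := by
          apply mul_le_mul_of_nonneg_right h1 (Real.exp_pos _).le
    _ = 4 * Real.exp (-(s - 4⁻¹) * u) := by rw [mul_assoc, ← Real.exp_add]; ring_nf
  -- value of ∫_{Ioi 0} u exp(-(s u))
  have hue_val : ∫ u in Ioi 0, u * Real.exp (-(s*u)) = (s^2)⁻¹ := by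
    have h := Real.integral_rpow_mul_exp_neg_mul_Ioi (show (0:ℝ) < 2 by norm_num) hs0
    rw [show ((2:ℝ) - 1) = 1 by norm_num] at h
    have heq : ∫ t in Ioi (0:ℝ), t ^ (1:ℝ) * Real.exp (-(s * t))
        = ∫ u in Ioi (0:ℝ), u * Real.exp (-(s*u)) := by
      refine setIntegral_congr_fun measurableSet_Ioi (fun t ht => ?_)
      rw [Real.rpow_one]
    rw [heq] at h
    rw [h, Real.Gamma_two, mul_one, show (2:ℝ) = ((2:ℕ):ℝ) by norm_num,
      Real.rpow_natCast, one_div, inv_pow]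
  -- split the integral
  have hint1 : IntegrableOn f (Ioc 0 1) := (int_on hβ hτ).mono_set Ioc_subset_Ioi_self
  have hint2 : IntegrableOn f (Ioi 1) :=
    (int_on hβ hτ).mono_set (fun x hx => show (0:ℝ) < x from lt_trans one_pos hx)
  have hsplit : ∫ u in Ioi (0:ℝ), f u = (∫ u in Ioc (0:ℝ) 1, f u) + ∫ u in Ioi (1:ℝ), f u := by
    rw [← Ioc_union_Ioi_eq_Ioi (zero_le_one (α := ℝ)),
      setIntegral_union (Ioc_disjoint_Ioi le_rfl) measurableSet_Ioi hint1 hint2]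
  -- bound on Ioc 0 1
  have hA1 : ∫ u in Ioc (0:ℝ) 1, f u ≤ P * (s^2)⁻¹ := by
    have hg_int : IntegrableOn (fun u : ℝ => P * (u * Real.exp (-(s*u)))) (Ioi 0) :=
      hue_int.const_mul P
    have step1 : ∫ u in Ioc (0:ℝ) 1, f u
        ≤ ∫ u in Ioc (0:ℝ) 1, P * (u * Real.exp (-(s*u))) := by
      apply setIntegral_mono_on hint1 (hg_int.mono_set Ioc_subset_Ioi_self) measurableSet_Ioc
      intro u hu
      have hu0 : 0 < u := hu.1
      have hu1 : u ≤ 1 := hu.2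
      have hΓ : 0 < Real.Gamma u := Real.Gamma_pos_of_pos hu0
      rw [hfu u]
      have hA : β ^ u ≤ max 1 β := by
        rcases le_total β 1 with h | h
        · exact le_trans (Real.rpow_le_one hβ.le h hu0.le) (le_max_left _ _)
        · refine le_trans ?_ (le_max_right _ _)
          calc β ^ u ≤ β ^ (1:ℝ) := Real.rpow_le_rpow_of_exponent_le h hu1
          _ = β := Real.rpow_one β
      have hC : (Real.Gamma u)⁻¹ ≤ Real.exp 2 * u := recGamma_le hu0
      calc β ^ u * (Real.exp (-(s*u)) * τ⁻¹) * (Real.Gamma u)⁻¹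
          ≤ max 1 β * (Real.exp (-(s*u)) * τ⁻¹) * (Real.exp 2 * u) := by
            apply mul_le_mul (mul_le_mul hA le_rfl (by positivity)
              (le_trans zero_le_one (le_max_left _ _))) hC (by positivity) (by positivity)
      _ = P * (u * Real.exp (-(s*u))) := by rw [hPdef]; ring
    have step2 : ∫ u in Ioc (0:ℝ) 1, P * (u * Real.exp (-(s*u)))
        ≤ ∫ u in Ioi (0:ℝ), P * (u * Real.exp (-(s*u))) := by
      apply setIntegral_mono_set hg_int _
        (HasSubset.Subset.eventuallyLE Ioc_subset_Ioi_self)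
      filter_upwards [self_mem_ae_restrict measurableSet_Ioi] with u hu
      have hu0 : (0:ℝ) < u := hu
      positivity
    calc ∫ u in Ioc (0:ℝ) 1, f u ≤ _ := step1
    _ ≤ ∫ u in Ioi (0:ℝ), P * (u * Real.exp (-(s*u))) := step2
    _ = P * ∫ u in Ioi (0:ℝ), u * Real.exp (-(s*u)) := integral_const_mul P _
    _ = P * (s^2)⁻¹ := by rw [hue_val]
  -- bound on Ioi 1
  have hA2 : ∫ u in Ioi (1:ℝ), f u ≤ K := by
    rw [hKdef]
    apply setIntegral_mono_on hint2 hKint measurableSet_Ioi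
    intro u hu
    have hu1 : (1:ℝ) ≤ u := le_of_lt hu
    have hu0 : (0:ℝ) < u := lt_of_lt_of_le one_pos hu1
    have hΓ : 0 < Real.Gamma u := Real.Gamma_pos_of_pos hu0
    rw [hfu u]
    have hexp : Real.exp (-(s*u)) * τ⁻¹ ≤ 1 := by
      have h1 : Real.exp (-(s*u)) ≤ Real.exp (-s) := by
        apply Real.exp_le_exp.2; nlinarith
      rw [hτs]
      calc Real.exp (-(s*u)) * (Real.exp (-s))⁻¹ ≤ Real.exp (-s) * (Real.exp (-s))⁻¹ := by
            apply mul_le_mul_of_nonneg_right h1 (by positivity)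
      _ = 1 := mul_inv_cancel₀ (Real.exp_pos _).ne'
    calc β ^ u * (Real.exp (-(s*u)) * τ⁻¹) * (Real.Gamma u)⁻¹
        ≤ β ^ u * 1 * (Real.Gamma u)⁻¹ := by
          apply mul_le_mul_of_nonneg_right (mul_le_mul_of_nonneg_left hexp
            (Real.rpow_nonneg hβ.le u)) (by positivity)
    _ = β ^ u / Real.Gamma u := by rw [mul_one, div_eq_mul_inv]
  -- τ s² ≤ 4
  have hτs4 : τ * s^2 ≤ 4 := by
    have hexp2 : Real.exp s = Real.exp (s/2) * Real.exp (s/2) := by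
      rw [← Real.exp_add]; ring_nf
    have h1 : Real.exp (-s) * Real.exp s = 1 := by rw [← Real.exp_add]; simp
    have h2 : s^2 ≤ 4 * Real.exp s := by
      nlinarith [Real.add_one_le_exp (s/2), Real.exp_pos (s/2)]
    rw [hτs]
    nlinarith [Real.exp_pos s, Real.exp_pos (-s)]
  have hpos : (0:ℝ) < τ * s^2 := by positivity
  -- final assembly
  have hlogsq : (Real.log τ)^2 = s^2 := by rw [hsdef]; ring
  rw [hlogsq]
  unfold sBeta
  rw [← hfdef, hsplit]
  have hπ : (0:ℝ) < Real.pi := Real.pi_pos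
  have hinv4 : (4:ℝ)⁻¹ ≤ (τ * s^2)⁻¹ := by
    exact inv_anti₀ hpos hτs4
  have hmulinv : (τ * s^2)⁻¹ = τ⁻¹ * (s^2)⁻¹ := mul_inv _ _
  calc 4 * Real.pi * ((∫ u in Ioc (0:ℝ) 1, f u) + ∫ u in Ioi (1:ℝ), f u)
      ≤ 4 * Real.pi * (P * (s^2)⁻¹ + K) := by
        apply mul_le_mul_of_nonneg_left (add_le_add hA1 hA2) (by positivity)
  _ = 4 * Real.pi * (max 1 β * Real.exp 2) * (τ * s^2)⁻¹ + 4 * Real.pi * K := by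
        rw [hmulinv, hPdef]; ring
  _ ≤ 4 * Real.pi * (max 1 β * Real.exp 2) * (τ * s^2)⁻¹
        + 16 * Real.pi * K * (τ * s^2)⁻¹ := by
        have : 4 * Real.pi * K = 16 * Real.pi * K * 4⁻¹ := by ring
        rw [this]
        apply add_le_add_right
        apply mul_le_mul_of_nonneg_left hinv4 (by positivity)
  _ = (4*Real.pi*(max 1 β * Real.exp 2) + 16*Real.pi*K) * (τ * s^2)⁻¹ := by ring

/-- `𝔰^β` is continuous on `(0,∞)`, and for every `0 < t < 1/2` it is comparable to
`(τ (log τ)²)⁻¹` on `(0, t]`, with the lower constant depending only on `β` and the upper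
constant depending only on `β` and `t`. -/
theorem stmt2 (β : ℝ) (hβ : 0 < β) :
    ContinuousOn (sBeta β) (Set.Ioi 0) ∧
    ∃ c : ℝ, 0 < c ∧ ∀ t : ℝ, 0 < t → t < 1 / 2 →
      ∃ C : ℝ, c ≤ C ∧ ∀ τ : ℝ, 0 < τ → τ ≤ t →
        c * (τ * (Real.log τ) ^ 2)⁻¹ ≤ sBeta β τ ∧
        sBeta β τ ≤ C * (τ * (Real.log τ) ^ 2)⁻¹ := by
  refine ⟨cont_part hβ, Real.pi/4 * (min 1 β * Real.exp (-(2:ℝ)⁻¹)), ?_, ?_⟩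
  · have := Real.pi_pos
    have h1 : (0:ℝ) < min 1 β := lt_min one_pos hβ
    positivity
  · intro t ht ht2
    set K : ℝ := ∫ u in Ioi 1, β ^ u / Real.Gamma u with hKdef
    have hK0 : 0 ≤ K := by
      apply setIntegral_nonneg measurableSet_Ioi
      intro u hu
      have : (0:ℝ) < u := lt_trans one_pos hu
      positivity
    refine ⟨4*Real.pi*(max 1 β * Real.exp 2) + 16*Real.pi*K, ?_, ?_⟩
    · have hπ := Real.pi_pos
      have h1 : min 1 β ≤ 1 := min_le_left _ _
      have h2 : Real.exp (-(2:ℝ)⁻¹) ≤ 1 := Real.exp_le_one_iff.2 (by norm_num)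
      have h3 : (1:ℝ) ≤ max 1 β := le_max_left _ _
      have h4 : (1:ℝ) ≤ Real.exp 2 := Real.one_le_exp (by norm_num)
      have h5 : (0:ℝ) < min 1 β := lt_min one_pos hβ
      have h6 : min 1 β * Real.exp (-(2:ℝ)⁻¹) ≤ 1 :=
        mul_le_one₀ h1 (Real.exp_pos _).le h2
      have h7 : (1:ℝ) ≤ max 1 β * Real.exp 2 :=
        one_le_mul_of_one_le_of_one_le h3 h4
      nlinarith [mul_nonneg hK0 hπ.le]
    · intro τ hτ hτt
      have hlt : Real.log 2 < -Real.log τ := by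
        have h1 : Real.log τ ≤ Real.log t := Real.log_le_log hτ hτt
        have h2 : Real.log t < Real.log (1/2) := Real.log_lt_log ht ht2
        have h3 : Real.log (1/2:ℝ) = -Real.log 2 := by
          rw [one_div, Real.log_inv]
        linarith
      exact ⟨lower_bd hβ hτ hlt, upper_bd hβ hτ hlt⟩
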